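/- arXiv:1709.09107 — 6 statements merged into one kernel-verified Lean document; each statement's English description precedes it below -/
import Mathlib

section
/- For every complex number s with Re(s) > 0, one has Gammaℝ(s+1) · ∫_ℝ (1 + x^2)^(-(s+1)/2) dx = Gammaℝ(s). (This expresses the paper's claim that the Langlands–Shahidi normalized intertwining operator of SL₂(ℝ) acts on the spherical vector by a quantity independent of s: the normalizing factor Gammaℝ(s)/Gammaℝ(s+1) exactly matches the Gindikin–Karpelevich integral.) -/
open Complex MeasureTheory Real

private lemma aux_arg_ne {a : ℝ} (ha : 0 < a) : (a : ℂ).arg ≠ π := by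
  rw [Complex.arg_ofReal_of_nonneg ha.le]
  exact (Real.pi_ne_zero).symm

private lemma aux_cpow_inv {a : ℝ} (ha : 0 < a) (w : ℂ) :
    ((a⁻¹ : ℝ) : ℂ) ^ w = (a : ℂ) ^ (-w) := by
  rw [Complex.ofReal_inv, inv_cpow _ _ (aux_arg_ne ha), ← cpow_neg]

private lemma aux_pointwise (s : ℂ) {x : ℝ} (hx : 0 < x) :
    |2 * x / (1 + x ^ 2) ^ 2| •
      (((x ^ 2 / (1 + x ^ 2) : ℝ) : ℂ) ^ ((1 : ℂ) / 2 - 1) *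
        (1 - ((x ^ 2 / (1 + x ^ 2) : ℝ) : ℂ)) ^ (s / 2 - 1)) =
      2 * ((1 + x ^ 2 : ℝ) : ℂ) ^ (-(s + 1) / 2) := by
  have ha : (0 : ℝ) < 1 + x ^ 2 := by positivity
  have hx2 : (0 : ℝ) < x ^ 2 := by positivity
  have hA : ((1 + x ^ 2 : ℝ) : ℂ) ≠ 0 := by
    exact_mod_cast ne_of_gt ha
  have e0 : ((x ^ 2 : ℝ) : ℂ) ^ ((1 : ℂ) / 2 - 1) = (x : ℂ)⁻¹ := by
    have h1 : ((1 : ℂ) / 2 - 1) = ((-(1 / 2) : ℝ) : ℂ) := by push_cast; ring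
    rw [h1, ← Complex.ofReal_cpow hx2.le]
    have h2 : (x ^ 2 : ℝ) ^ (-(1 / 2) : ℝ) = x⁻¹ := by
      rw [← Real.rpow_natCast x 2, ← Real.rpow_mul hx.le]
      norm_num
      exact Real.rpow_neg_one x
    rw [h2, Complex.ofReal_inv]
  have e1 : ((x ^ 2 / (1 + x ^ 2) : ℝ) : ℂ) ^ ((1 : ℂ) / 2 - 1)
      = (x : ℂ)⁻¹ * ((1 + x ^ 2 : ℝ) : ℂ) ^ (-((1 : ℂ) / 2 - 1)) := by
    rw [div_eq_mul_inv, Complex.ofReal_mul,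
      mul_cpow_ofReal_nonneg hx2.le (inv_nonneg.2 ha.le), aux_cpow_inv ha, e0]
  have e2 : (1 - ((x ^ 2 / (1 + x ^ 2) : ℝ) : ℂ)) ^ (s / 2 - 1)
      = ((1 + x ^ 2 : ℝ) : ℂ) ^ (-(s / 2 - 1)) := by
    have h3 : (1 : ℝ) - x ^ 2 / (1 + x ^ 2) = (1 + x ^ 2)⁻¹ := by
      field_simp
      ring
    have h4 : (1 : ℂ) - ((x ^ 2 / (1 + x ^ 2) : ℝ) : ℂ) = (((1 + x ^ 2)⁻¹ : ℝ) : ℂ) := by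
      rw [← h3]; push_cast; ring
    rw [h4, aux_cpow_inv ha]
  have habs : |2 * x / (1 + x ^ 2) ^ 2| = 2 * x / (1 + x ^ 2) ^ 2 :=
    abs_of_pos (by positivity)
  rw [habs, e1, e2, Complex.real_smul]
  have hcoef : ((2 * x / (1 + x ^ 2) ^ 2 : ℝ) : ℂ)
      = 2 * (x : ℂ) * ((1 + x ^ 2 : ℝ) : ℂ) ^ (-2 : ℂ) := by
    rw [show (-2 : ℂ) = -((2 : ℕ) : ℂ) by norm_num, cpow_neg, cpow_natCast]
    push_cast
    field_simp
  rw [hcoef]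
  have hxC : (x : ℂ) ≠ 0 := by exact_mod_cast ne_of_gt hx
  have hpow : ((1 + x ^ 2 : ℝ) : ℂ) ^ (-2 : ℂ) * (((1 + x ^ 2 : ℝ) : ℂ) ^ (-((1 : ℂ) / 2 - 1))
      * ((1 + x ^ 2 : ℝ) : ℂ) ^ (-(s / 2 - 1))) = ((1 + x ^ 2 : ℝ) : ℂ) ^ (-(s + 1) / 2) := by
    rw [← cpow_add _ _ hA, ← cpow_add _ _ hA]
    congr 1
    ring
  calc 2 * (x : ℂ) * ((1 + x ^ 2 : ℝ) : ℂ) ^ (-2 : ℂ) *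
        ((x : ℂ)⁻¹ * ((1 + x ^ 2 : ℝ) : ℂ) ^ (-((1 : ℂ) / 2 - 1)) *
          ((1 + x ^ 2 : ℝ) : ℂ) ^ (-(s / 2 - 1)))
      = 2 * ((x : ℂ) * (x : ℂ)⁻¹) * (((1 + x ^ 2 : ℝ) : ℂ) ^ (-2 : ℂ) *
          (((1 + x ^ 2 : ℝ) : ℂ) ^ (-((1 : ℂ) / 2 - 1)) *
            ((1 + x ^ 2 : ℝ) : ℂ) ^ (-(s / 2 - 1)))) := by ring
    _ = 2 * ((1 + x ^ 2 : ℝ) : ℂ) ^ (-(s + 1) / 2) := by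
        rw [mul_inv_cancel₀ hxC, hpow]; ring

/-- The Langlands–Shahidi normalized intertwining operator of `SL₂(ℝ)` acts on the spherical
vector by a quantity independent of `s`:
`Gammaℝ(s+1) · ∫_ℝ (1 + x²)^(-(s+1)/2) dx = Gammaℝ(s)` for `Re s > 0`. -/
theorem sl2_real_normalized_intertwining_constant (s : ℂ) (hs : 0 < s.re) :
    Complex.Gammaℝ (s + 1) * ∫ x : ℝ, ((1 + x ^ 2 : ℝ) : ℂ) ^ (-(s + 1) / 2) =
      Complex.Gammaℝ s := by
  set g : ℝ → ℂ := fun x => ((1 + x ^ 2 : ℝ) : ℂ) ^ (-(s + 1) / 2) with hg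
  have hpos : ∀ x : ℝ, (0 : ℝ) < 1 + x ^ 2 := fun x => by positivity
  have hre : (-(s + 1) / 2).re = -(s.re + 1) / 2 := by
    simp [Complex.div_re, Complex.neg_re, Complex.add_re]
  have hint : Integrable g := by
    have hmaj : Integrable (fun x : ℝ => ((1 : ℝ) + ‖x‖ ^ 2) ^ (-(s.re + 1) / 2)) :=
      integrable_rpow_neg_one_add_norm_sq (by simpa using hs)
    refine hmaj.mono' ?_ (Filter.Eventually.of_forall fun x => ?_)
    · apply Continuous.aestronglyMeasurable
      refine Continuous.cpow ?_ continuous_const fun x => ?_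
      · exact Complex.continuous_ofReal.comp (continuous_const.add (continuous_pow 2))
      · exact Complex.ofReal_mem_slitPlane.2 (hpos x)
    · have h5 : ‖g x‖ = (1 + x ^ 2) ^ (-(s.re + 1) / 2) := by
        rw [hg]
        simp only
        rw [Complex.norm_cpow_eq_rpow_re_of_pos (hpos x), hre]
      rw [h5, Real.norm_eq_abs, _root_.sq_abs]
  have heven : ∀ x : ℝ, g (-x) = g x := by
    intro x; simp [hg, neg_sq]
  have hsplit : (∫ x : ℝ, g x) = 2 * ∫ x in Set.Ioi (0 : ℝ), g x := by
    rw [← intervalIntegral.integral_Iic_add_Ioi (b := (0 : ℝ))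
      hint.integrableOn hint.integrableOn]
    have h6 : (∫ x in Set.Iic (0 : ℝ), g x) = ∫ x in Set.Ioi (0 : ℝ), g x := by
      rw [show Set.Iic (0 : ℝ) = Set.Iic (-(0 : ℝ)) by norm_num, ← integral_comp_neg_Ioi]
      exact integral_congr_ae (Filter.Eventually.of_forall fun x => heven x)
    rw [h6]; ring
  set f : ℝ → ℝ := fun x => x ^ 2 / (1 + x ^ 2) with hf
  have himg : f '' Set.Ioi 0 = Set.Ioo 0 1 := by
    ext t
    constructor
    · rintro ⟨x, hx, rfl⟩
      have hx : (0 : ℝ) < x := hx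
      constructor
      · have := hpos x
        simp only [hf]
        positivity
      · simp only [hf]
        rw [div_lt_one (hpos x)]
        nlinarith
    · rintro ⟨ht0, ht1⟩
      have h1t : (0 : ℝ) < 1 - t := by linarith
      refine ⟨Real.sqrt (t / (1 - t)), ?_, ?_⟩
      · exact Real.sqrt_pos.2 (div_pos ht0 h1t)
      · have hsq : Real.sqrt (t / (1 - t)) ^ 2 = t / (1 - t) :=
          Real.sq_sqrt (le_of_lt (div_pos ht0 h1t))
        simp only [hf, hsq]
        rw [div_eq_iff (by positivity)]
        field_simp
        ring
  have hderiv : ∀ x ∈ Set.Ioi (0 : ℝ),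
      HasDerivWithinAt f (2 * x / (1 + x ^ 2) ^ 2) (Set.Ioi 0) x := by
    intro x _
    have h1 : HasDerivAt (fun y : ℝ => y ^ 2) (2 * x) x := by
      simpa using hasDerivAt_pow 2 x
    have h2 : HasDerivAt (fun y : ℝ => 1 + y ^ 2) (2 * x) x := h1.const_add 1
    have h3 := h1.div h2 (ne_of_gt (hpos x))
    have heq : (2 * x * (1 + x ^ 2) - x ^ 2 * (2 * x)) / (1 + x ^ 2) ^ 2
        = 2 * x / (1 + x ^ 2) ^ 2 := by
      field_simp
      ring
    rw [heq] at h3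
    exact h3.hasDerivWithinAt
  have hinj : Set.InjOn f (Set.Ioi 0) := by
    intro x hx y hy h
    have hx : (0 : ℝ) < x := hx
    have hy : (0 : ℝ) < y := hy
    simp only [hf] at h
    have h' : x ^ 2 * (1 + y ^ 2) = y ^ 2 * (1 + x ^ 2) := by
      field_simp at h
      linarith [h]
    have hxy : x ^ 2 = y ^ 2 := by nlinarith
    nlinarith [sq_nonneg (x - y), sq_nonneg (x + y)]
  have hchg := integral_image_eq_integral_abs_deriv_smul measurableSet_Ioi hderiv hinj
    (fun t : ℝ => (t : ℂ) ^ ((1 : ℂ) / 2 - 1) * (1 - (t : ℂ)) ^ (s / 2 - 1))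
  rw [himg] at hchg
  have hbeta : Complex.betaIntegral (1 / 2) (s / 2) = 2 * ∫ x in Set.Ioi (0 : ℝ), g x := by
    have hb1 : Complex.betaIntegral (1 / 2) (s / 2)
        = ∫ t in Set.Ioo (0 : ℝ) 1, (t : ℂ) ^ ((1 : ℂ) / 2 - 1) * (1 - (t : ℂ)) ^ (s / 2 - 1) := by
      rw [Complex.betaIntegral, intervalIntegral.integral_of_le zero_le_one,
        ← integral_Ioc_eq_integral_Ioo]
    rw [hb1, hchg]
    have h7 : (∫ x in Set.Ioi (0 : ℝ),
        |2 * x / (1 + x ^ 2) ^ 2| • ((↑(f x) : ℂ) ^ ((1 : ℂ) / 2 - 1) *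
          (1 - (↑(f x) : ℂ)) ^ (s / 2 - 1))) = ∫ x in Set.Ioi (0 : ℝ), 2 * g x := by
      refine setIntegral_congr_fun measurableSet_Ioi fun x hx => ?_
      exact aux_pointwise s hx
    rw [h7, integral_const_mul]
  rw [hsplit, ← hbeta]
  have h12 : (0 : ℝ) < ((1 : ℂ) / 2).re := by norm_num
  have hs2 : (0 : ℝ) < (s / 2).re := by
    rw [Complex.div_re]
    simp
    positivity
  have hGB := Complex.Gamma_mul_Gamma_eq_betaIntegral h12 hs2
  have hadd : (1 : ℂ) / 2 + s / 2 = (s + 1) / 2 := by ring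
  rw [hadd] at hGB
  rw [Complex.Gammaℝ_def, Complex.Gammaℝ_def, mul_assoc, ← hGB, Complex.Gamma_one_half_eq,
    ← mul_assoc, ← Complex.cpow_add _ _ (Complex.ofReal_ne_zero.2 Real.pi_ne_zero)]
  congr 1
  ring
end

section
/- For every complex number s with Re(s) > 0, one has Gammaℂ(s+1) · ∫_{ℝ²} (1 + x^2 + y^2)^(-(s+1)) dx dy = (1/2) · Gammaℂ(s). (This expresses the paper's claim that the Langlands–Shahidi normalized intertwining operator of SL₂(ℂ) acts on the spherical vector by a quantity independent of s: the normalizing factor Gammaℂ(s)/Gammaℂ(s+1) matches the Gindikin–Karpelevich integral up to the constant 1/2 coming from the normalization of measures.) -/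
open Complex MeasureTheory Real Set Filter Topology

private lemma radial_integral_aux (s : ℂ) (hs : 0 < s.re) :
    ∫ r in Ioi (0 : ℝ), (r : ℂ) * ((1 + r ^ 2 : ℝ) : ℂ) ^ (-(s + 1)) = 1 / (2 * s) := by
  have hs0 : s ≠ 0 := fun h => by simp [h] at hs
  set a : ℝ := s.re + 1 with ha_def
  have ha : 1 < a := by simp [ha_def]; linarith
  -- real antiderivative for integrability
  have hGderiv : ∀ x ∈ Ioi (0 : ℝ), HasDerivAt
      (fun r : ℝ => (1 + r ^ 2) ^ (1 - a) / (2 * (1 - a)))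
      (x * (1 + x ^ 2) ^ (-a)) x := by
    intro x _
    have hbase : HasDerivAt (fun r : ℝ => 1 + r ^ 2) (2 * x) x := by
      simpa using ((hasDerivAt_pow 2 x).const_add 1)
    have hpos : (0 : ℝ) < 1 + x ^ 2 := by positivity
    have := (Real.hasDerivAt_rpow_const (p := 1 - a) (Or.inl hpos.ne')).comp x hbase
    have h2 := this.div_const (2 * (1 - a))
    refine HasDerivAt.congr_deriv h2 (Eq.symm ?_)
    have h1a : (1 : ℝ) - a ≠ 0 := by linarith
    rw [show (1:ℝ) - a - 1 = -a by ring]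
    field_simp
  have hGtend : Tendsto (fun r : ℝ => (1 + r ^ 2 : ℝ) ^ (1 - a) / (2 * (1 - a))) atTop
      (𝓝 (0 / (2 * (1 - a)))) := by
    apply Tendsto.div_const
    have h1 : Tendsto (fun r : ℝ => 1 + r ^ 2) atTop atTop :=
      tendsto_atTop_add_const_left _ 1 (tendsto_pow_atTop two_ne_zero)
    have h2 : Tendsto (fun y : ℝ => y ^ (-(a - 1))) atTop (𝓝 0) :=
      tendsto_rpow_neg_atTop (by linarith)
    simpa [show -(a - 1) = 1 - a by ring, Function.comp_def] using h2.comp h1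
  have hGcont : ContinuousWithinAt
      (fun r : ℝ => (1 + r ^ 2 : ℝ) ^ (1 - a) / (2 * (1 - a))) (Ici (0 : ℝ)) 0 := by
    apply Continuous.continuousWithinAt
    apply Continuous.div_const
    apply Continuous.rpow_const (by continuity)
    intro x; exact Or.inl (by positivity : (0:ℝ) < 1 + x ^ 2).ne'
  have hGint : IntegrableOn (fun x : ℝ => x * (1 + x ^ 2) ^ (-a)) (Ioi (0 : ℝ)) :=
    integrableOn_Ioi_deriv_of_nonneg hGcont hGderiv
      (fun x hx => by have hx' : (0:ℝ) < x := hx; positivity) hGtend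
  -- complex antiderivative
  have hFderiv : ∀ x ∈ Ioi (0 : ℝ), HasDerivAt
      (fun r : ℝ => ((1 + r ^ 2 : ℝ) : ℂ) ^ (-s) / (-2 * s))
      ((x : ℂ) * ((1 + x ^ 2 : ℝ) : ℂ) ^ (-(s + 1))) x := by
    intro x _
    have hbase : HasDerivAt (fun r : ℝ => ((1 + r ^ 2 : ℝ) : ℂ)) (2 * x : ℝ) x := by
      have : HasDerivAt (fun r : ℝ => 1 + r ^ 2) (2 * x) x := by
        simpa using ((hasDerivAt_pow 2 x).const_add 1)
      exact this.ofReal_comp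
    have hslit : ((1 + x ^ 2 : ℝ) : ℂ) ∈ Complex.slitPlane :=
      Complex.ofReal_mem_slitPlane.2 (by positivity)
    have h1 := ((Complex.hasStrictDerivAt_cpow_const (c := -s) hslit).hasDerivAt.comp x
      hbase).div_const (-2 * s)
    refine HasDerivAt.congr_deriv h1 (Eq.symm ?_)
    have hb0 : ((1 + x ^ 2 : ℝ) : ℂ) ≠ 0 := by
      simpa using Complex.slitPlane_ne_zero hslit
    rw [show -s - 1 = -(s + 1) by ring]
    field_simp
    push_cast
    ring
  have hFtend : Tendsto (fun r : ℝ => ((1 + r ^ 2 : ℝ) : ℂ) ^ (-s) / (-2 * s)) atTop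
      (𝓝 0) := by
    rw [show (0 : ℂ) = 0 / (-2 * s) by simp]
    apply Tendsto.div_const
    rw [tendsto_zero_iff_norm_tendsto_zero]
    have hnorm : ∀ r : ℝ, ‖((1 + r ^ 2 : ℝ) : ℂ) ^ (-s)‖ = (1 + r ^ 2 : ℝ) ^ (-s.re) := by
      intro r
      rw [Complex.norm_cpow_eq_rpow_re_of_pos (by positivity)]
      simp
    simp_rw [hnorm]
    have h1 : Tendsto (fun r : ℝ => 1 + r ^ 2) atTop atTop :=
      tendsto_atTop_add_const_left _ 1 (tendsto_pow_atTop two_ne_zero)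
    exact (tendsto_rpow_neg_atTop hs).comp h1
  have hFcont : ContinuousWithinAt
      (fun r : ℝ => ((1 + r ^ 2 : ℝ) : ℂ) ^ (-s) / (-2 * s)) (Ici (0 : ℝ)) 0 := by
    apply Continuous.continuousWithinAt
    apply Continuous.div_const
    apply Continuous.cpow (by continuity) continuous_const
    intro x; exact Complex.ofReal_mem_slitPlane.2 (by positivity)
  -- integrability of the complex integrand
  have hint : IntegrableOn (fun r : ℝ => (r : ℂ) * ((1 + r ^ 2 : ℝ) : ℂ) ^ (-(s + 1)))
      (Ioi (0 : ℝ)) := by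
    apply Integrable.mono' hGint
    · apply Continuous.aestronglyMeasurable
      apply Continuous.mul Complex.continuous_ofReal
      apply Continuous.cpow (by continuity) continuous_const
      intro x; exact Complex.ofReal_mem_slitPlane.2 (by positivity)
    · filter_upwards [ae_restrict_mem measurableSet_Ioi] with x hx
      have hx' : (0 : ℝ) < x := hx
      rw [norm_mul,
        Complex.norm_cpow_eq_rpow_re_of_pos (by positivity : (0:ℝ) < 1 + x ^ 2),
        Complex.norm_real, Real.norm_eq_abs, abs_of_pos hx']
      apply le_of_eq
      congr 1
  have := integral_Ioi_of_hasDerivAt_of_tendsto hFcont hFderiv hint hFtend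
  rw [this]
  have : ((1 + (0:ℝ) ^ 2 : ℝ) : ℂ) ^ (-s) = 1 := by norm_num
  simp only [this]
  field_simp
  ring

/-- The Langlands–Shahidi normalized intertwining operator of `SL₂(ℂ)` acts on the spherical
vector by a quantity independent of `s`:
`Gammaℂ(s+1) · ∫_{ℝ²} (1 + x² + y²)^(-(s+1)) dx dy = (1/2) · Gammaℂ(s)` for `Re s > 0`. -/
theorem sl2_complex_normalized_intertwining_constant (s : ℂ) (hs : 0 < s.re) :
    Complex.Gammaℂ (s + 1) * ∫ p : ℝ × ℝ, ((1 + p.1 ^ 2 + p.2 ^ 2 : ℝ) : ℂ) ^ (-(s + 1)) =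
      (1 / 2 : ℂ) * Complex.Gammaℂ s := by
  have hs0 : s ≠ 0 := fun h => by simp [h] at hs
  have hI : (∫ p : ℝ × ℝ, ((1 + p.1 ^ 2 + p.2 ^ 2 : ℝ) : ℂ) ^ (-(s + 1)))
      = (π : ℂ) / s := by
    rw [← integral_comp_polarCoord_symm
      (fun p : ℝ × ℝ => ((1 + p.1 ^ 2 + p.2 ^ 2 : ℝ) : ℂ) ^ (-(s + 1)))]
    have heq : ∀ p : ℝ × ℝ,
        p.1 • (((1 + (polarCoord.symm p).1 ^ 2 + (polarCoord.symm p).2 ^ 2 : ℝ) : ℂ) ^ (-(s + 1)))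
          = (p.1 : ℂ) * ((1 + p.1 ^ 2 : ℝ) : ℂ) ^ (-(s + 1)) := by
      intro p
      rw [polarCoord_symm_apply]
      simp only [polarCoord_symm_apply]
      rw [show (1 + (p.1 * Real.cos p.2, p.1 * Real.sin p.2).1 ^ 2
          + (p.1 * Real.cos p.2, p.1 * Real.sin p.2).2 ^ 2 : ℝ) = 1 + p.1 ^ 2 from by
        simp only; linear_combination p.1 ^ 2 * (Real.sin_sq_add_cos_sq p.2),
        Complex.real_smul]
    simp_rw [heq]
    rw [polarCoord_target]
    calc (∫ p in Ioi (0:ℝ) ×ˢ Ioo (-π) π, (p.1 : ℂ) * ((1 + p.1 ^ 2 : ℝ) : ℂ) ^ (-(s + 1)))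
        = (∫ r in Ioi (0:ℝ), (r : ℂ) * ((1 + r ^ 2 : ℝ) : ℂ) ^ (-(s + 1)))
            * ∫ _ in Ioo (-π) π, (1 : ℂ) := by
          rw [← setIntegral_prod_mul, ← Measure.volume_eq_prod]
          simp
      _ = (1 / (2 * s)) * (2 * π : ℝ) := by
          rw [radial_integral_aux s hs]
          congr 1
          simp only [integral_const, measureReal_restrict_apply MeasurableSet.univ,
            Real.volume_real_Ioo_of_le (by linarith [Real.pi_pos] : -π ≤ π), Set.univ_inter,
            Real.volume_Ioo, sub_neg_eq_add, ← two_mul,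
            ENNReal.toReal_ofReal (by positivity : (0:ℝ) ≤ 2 * π), Complex.real_smul, mul_one]
      _ = (π : ℂ) / s := by push_cast; field_simp
  rw [hI, Complex.Gammaℂ_add_one hs0]
  have hπ : (π : ℂ) ≠ 0 := Complex.ofReal_ne_zero.2 Real.pi_ne_zero
  field_simp
end

section
/- For every complex number s with Re(s) > 0, one has Gammaℂ(s+1) · Gammaℝ(2s+2) · Γ(2s) · Γ(s + 1/2) = (1/(4·π^(3/2))) · Gammaℂ(s) · Gammaℝ(2s+1) · Γ(2s+1) · Γ(s+1). Equivalently, the Langlands–Shahidi normalizing factor [Gammaℂ(s+1)·Gammaℝ(2s+2)] / [Gammaℂ(s)·Gammaℝ(2s+1)] for the real quasi-split group SU(2,1) equals, up to the constant 1/(4·π^(3/2)), the reciprocal of the Knapp–Schiffmann c-function value Γ(2s)·Γ(s+1/2) / (Γ(2s+1)·Γ(s+1)). (This is the paper's key computation showing that the normalized intertwining operator of SU(2,1) over ℝ acts on the spherical vector by a constant independent of s.) -/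
open Complex Real

/-- The Langlands–Shahidi normalizing factor for the real quasi-split group `SU(2,1)` matches,
up to the constant `1/(4·π^(3/2))`, the reciprocal of the Knapp–Schiffmann `c`-function value:
for `Re s > 0`,
`Gammaℂ(s+1) · Gammaℝ(2s+2) · Γ(2s) · Γ(s+1/2)
  = (1/(4·π^(3/2))) · Gammaℂ(s) · Gammaℝ(2s+1) · Γ(2s+1) · Γ(s+1)`. -/
theorem su21_real_normalized_intertwining_constant (s : ℂ) (hs : 0 < s.re) :
    Complex.Gammaℂ (s + 1) * Complex.Gammaℝ (2 * s + 2) * Complex.Gamma (2 * s) *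
        Complex.Gamma (s + 1 / 2) =
      (1 / (4 * ((π : ℝ) ^ ((3 : ℝ) / 2) : ℝ)) : ℂ) * Complex.Gammaℂ s *
        Complex.Gammaℝ (2 * s + 1) * Complex.Gamma (2 * s + 1) * Complex.Gamma (s + 1) := by
  have hs0 : s ≠ 0 := fun h => by simp [h] at hs
  have h2s : (2 : ℂ) * s ≠ 0 := mul_ne_zero two_ne_zero hs0
  have hpi : (π : ℂ) ≠ 0 := Complex.ofReal_ne_zero.2 Real.pi_ne_zero
  have hA : Complex.Gammaℝ (2 * s) = (π : ℂ) ^ (-s) * Complex.Gamma s := by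
    rw [Complex.Gammaℝ_def]
    ring_nf
  have hB : Complex.Gammaℝ (2 * s + 1)
      = (π : ℂ) ^ (-s) * (π : ℂ) ^ (-(1 / 2 : ℂ)) * Complex.Gamma (s + 1 / 2) := by
    rw [Complex.Gammaℝ_def, ← Complex.cpow_add _ _ hpi]
    norm_num
    ring_nf
  have hC : (((π : ℝ) ^ ((3 : ℝ) / 2) : ℝ) : ℂ) = (π : ℂ) * (π : ℂ) ^ ((1 / 2 : ℂ)) := by
    rw [Complex.ofReal_cpow Real.pi_pos.le]
    rw [show (((3 : ℝ) / 2 : ℝ) : ℂ) = 1 + (1 / 2 : ℂ) by norm_num,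
      Complex.cpow_add _ _ hpi, Complex.cpow_one]
  have hD : (π : ℂ) ^ (-(1 / 2 : ℂ)) * (π : ℂ) ^ ((1 / 2 : ℂ)) = 1 := by
    rw [← Complex.cpow_add _ _ hpi]; norm_num
  have hE : (π : ℂ) ^ (-s) ≠ 0 := by
    simp [Complex.cpow_eq_zero_iff, hpi]
  rw [Complex.Gammaℂ_add_one hs0, Complex.Gammaℝ_add_two h2s,
    Complex.Gamma_add_one _ h2s, Complex.Gamma_add_one _ hs0, hA, hB, hC]
  field_simp
  have hF : (π : ℂ) ^ ((1 / 2 : ℂ)) * (π : ℂ) ^ ((1 / 2 : ℂ)) = (π : ℂ) := by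
    rw [← Complex.cpow_add _ _ hpi]; norm_num
  have hG : (π : ℂ) ^ ((1 / 2 : ℂ)) ≠ 0 := by
    simp [Complex.cpow_eq_zero_iff, hpi]
  have hneg : (π : ℂ) ^ (-1 / 2 : ℂ) = ((π : ℂ) ^ (1 / 2 : ℂ))⁻¹ := by
    rw [show (-1 / 2 : ℂ) = -(1 / 2) by norm_num]
    exact eq_inv_of_mul_eq_one_left hD
  have key : (π : ℂ) ^ (-1 / 2 : ℂ) * (π : ℂ) ^ 2 * ((π : ℂ))⁻¹ * (((π : ℂ) ^ (1 / 2 : ℂ)))⁻¹ = 1 := by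
    rw [hneg]
    field_simp
    linear_combination (-1 : ℂ) * hF
  have hD2 : (π : ℂ) ^ (-1 / 2 : ℂ) * (π : ℂ) ^ (1 / 2 : ℂ) = 1 := by
    rw [hneg]; exact inv_mul_cancel₀ hG
  ring_nf
  linear_combination (4 * (s.Gammaℂ * Complex.Gamma s * Complex.Gamma (s * 2) *
    Complex.Gamma (1 / 2 + s)) * (π : ℂ) ^ (-1 / 2 : ℂ)) * hF -
    (4 * (s.Gammaℂ * Complex.Gamma s * Complex.Gamma (s * 2) * Complex.Gamma (1 / 2 + s)) *
      (π : ℂ) ^ (1 / 2 : ℂ)) * hD2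
end

section
/- Let p be a prime and let μ be the Haar measure on the additive group of the p-adic field ℚ_p, normalized so that μ(ℤ_p) = 1. For every complex number s with Re(s) > 0, the function x ↦ max(1, |x|_p)^(-(s+1)) is integrable on ℚ_p and ∫_{ℚ_p} max(1, |x|_p)^(-(s+1)) dμ(x) = (1 - p^(-(s+1))) / (1 - p^(-s)). (This is the Gindikin–Karpelevich/Casselman value of the standard intertwining operator of SL₂(ℚ_p) on the spherical vector of the unramified principal series, i.e. the ratio ζ_p(s)/ζ_p(s+1) of local zeta factors, entering the non-archimedean places of the paper's theorem.) -/
open Complex MeasureTheory ENNReal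

namespace GKaux

variable (p : ℕ) [hp : Fact p.Prime]

def B (n : ℕ) : Set ℚ_[p] := {x | ‖x‖ ≤ (p : ℝ) ^ n}

lemma one_le_p : (1 : ℝ) ≤ p := by exact_mod_cast hp.out.one_lt.le

lemma one_lt_p : (1 : ℝ) < p := by exact_mod_cast hp.out.one_lt

lemma p_pos : (0 : ℝ) < p := by exact_mod_cast hp.out.pos

lemma p_ne_zero' : (p : ℚ_[p]) ≠ 0 := by exact_mod_cast hp.out.ne_zero

lemma measurableSet_B (n : ℕ) [MeasurableSpace ℚ_[p]] [BorelSpace ℚ_[p]] :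
    MeasurableSet (B p n) :=
  (isClosed_le continuous_norm continuous_const).measurableSet

lemma B_subset (n : ℕ) : B p n ⊆ B p (n+1) := fun x hx =>
  hx.trans (pow_le_pow_right₀ (one_le_p p) (Nat.le_succ n))

lemma norm_unit_scale (n k : ℕ) :
    ‖(k : ℚ_[p]) * (p : ℚ_[p]) ^ (-(n+1 : ℤ))‖ = ‖(k : ℚ_[p])‖ * (p : ℝ) ^ (n+1) := by
  rw [norm_mul, norm_zpow, Padic.norm_p, inv_zpow, ← zpow_neg, neg_neg]
  norm_cast

lemma norm_coset_mem {n : ℕ} {x : ℚ_[p]} {k : ℕ}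
    (h : ‖x - (k : ℚ_[p]) * (p : ℚ_[p]) ^ (-(n+1 : ℤ))‖ ≤ (p : ℝ) ^ n) :
    x ∈ B p (n+1) := by
  have hpk : ‖(k : ℚ_[p]) * (p : ℚ_[p]) ^ (-(n+1 : ℤ))‖ ≤ (p : ℝ) ^ (n+1) := by
    rw [norm_unit_scale]
    have h1 : ‖(k : ℚ_[p])‖ ≤ 1 := by exact_mod_cast Padic.norm_int_le_one (k : ℤ)
    calc ‖(k : ℚ_[p])‖ * (p:ℝ) ^ (n+1) ≤ 1 * (p:ℝ) ^ (n+1) := by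
          apply mul_le_mul_of_nonneg_right h1; positivity
      _ = (p : ℝ) ^ (n+1) := one_mul _
  have := Padic.nonarchimedean (x - (k : ℚ_[p]) * (p : ℚ_[p]) ^ (-(n+1 : ℤ)))
    ((k : ℚ_[p]) * (p : ℚ_[p]) ^ (-(n+1 : ℤ)))
  simp only [sub_add_cancel] at this
  exact this.trans (max_le (h.trans (pow_le_pow_right₀ (one_le_p p) (Nat.le_succ n))) hpk)

/-- coset k of B n inside B (n+1) -/
def C (n k : ℕ) : Set ℚ_[p] := {x | ‖x - (k : ℚ_[p]) * (p : ℚ_[p]) ^ (-(n+1 : ℤ))‖ ≤ (p : ℝ) ^ n}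

lemma B_succ_eq_biUnion (n : ℕ) :
    B p (n+1) = ⋃ k ∈ Finset.range p, C p n k := by
  ext x
  simp only [Set.mem_iUnion, Finset.mem_range, exists_prop]
  constructor
  · intro hx
    -- x * p^(n+1) has norm ≤ 1
    have hy : ‖x * (p : ℚ_[p]) ^ (n+1 : ℕ)‖ ≤ 1 := by
      rw [norm_mul, norm_pow, Padic.norm_p]
      have : ((p:ℝ)⁻¹) ^ (n+1) = ((p:ℝ) ^ (n+1))⁻¹ := by rw [inv_pow]
      rw [this]
      rw [mul_inv_le_iff₀ (pow_pos (p_pos p) _), one_mul]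
      exact hx
    set z : ℤ_[p] := ⟨x * (p : ℚ_[p]) ^ (n+1 : ℕ), hy⟩ with hz
    refine ⟨z.appr 1, by simpa using z.appr_lt 1, ?_⟩
    have hspec : ‖z - (z.appr 1 : ℤ_[p])‖ ≤ (p : ℝ) ^ (-(1:ℕ) : ℤ) :=
      (PadicInt.norm_le_pow_iff_mem_span_pow _ 1).mpr (by simpa using z.appr_spec 1)
    have hxz : x = (z : ℚ_[p]) * (p : ℚ_[p]) ^ (-(n+1 : ℤ)) := by
      have hz' : (z : ℚ_[p]) = x * (p : ℚ_[p]) ^ (n+1 : ℕ) := rfl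
      rw [hz', mul_assoc, ← zpow_natCast (p:ℚ_[p]) (n+1), ← zpow_add₀ (p_ne_zero' p)]
      have harith : ((n+1:ℕ):ℤ) + (-(n+1:ℤ)) = 0 := by push_cast; ring
      rw [harith, zpow_zero, mul_one]
    show ‖x - (z.appr 1 : ℚ_[p]) * (p : ℚ_[p]) ^ (-(n+1 : ℤ))‖ ≤ (p : ℝ) ^ n
    rw [hxz, ← sub_mul, norm_mul, norm_zpow, Padic.norm_p]
    have h1 : ‖(z : ℚ_[p]) - (z.appr 1 : ℚ_[p])‖ ≤ (p : ℝ)⁻¹ := by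
      have := hspec
      rw [PadicInt.norm_def] at this
      push_cast at this ⊢
      simpa using this
    calc ‖(z : ℚ_[p]) - (z.appr 1 : ℚ_[p])‖ * ((p:ℝ)⁻¹) ^ (-(n+1:ℤ))
        ≤ (p:ℝ)⁻¹ * ((p:ℝ)⁻¹) ^ (-(n+1:ℤ)) := by
          apply mul_le_mul_of_nonneg_right h1; positivity
      _ = (p : ℝ) ^ n := by
          rw [inv_zpow, ← zpow_neg, neg_neg]
          rw [← zpow_natCast (p:ℝ) n]
          rw [← zpow_neg_one]
          rw [← zpow_add₀ (p_pos p).ne']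
          congr 1
          push_cast
          ring
  · rintro ⟨k, -, hk⟩
    exact norm_coset_mem p hk

lemma norm_scale (a : ℚ_[p]) (n : ℕ) :
    ‖a * (p : ℚ_[p]) ^ (-(n+1 : ℤ))‖ = ‖a‖ * (p : ℝ) ^ (n+1) := by
  rw [norm_mul, norm_zpow, Padic.norm_p, inv_zpow, ← zpow_neg, neg_neg]
  norm_cast

lemma C_disjoint (n : ℕ) : Set.PairwiseDisjoint (↑(Finset.range p)) (C p n) := by
  intro j hj k hk hjk
  simp only [Finset.coe_range, Set.mem_Iio] at hj hk
  rw [Function.onFun, Set.disjoint_left]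
  intro x hxj hxk
  have hxj' : ‖x - (j : ℚ_[p]) * (p : ℚ_[p]) ^ (-(n+1 : ℤ))‖ ≤ (p : ℝ) ^ n := hxj
  have hxk' : ‖x - (k : ℚ_[p]) * (p : ℚ_[p]) ^ (-(n+1 : ℤ))‖ ≤ (p : ℝ) ^ n := hxk
  have hdiff : ‖((j:ℚ_[p]) - k) * (p : ℚ_[p]) ^ (-(n+1 : ℤ))‖ ≤ (p : ℝ) ^ n := by
    have heq : ((j:ℚ_[p]) - k) * (p : ℚ_[p]) ^ (-(n+1 : ℤ)) =
        (x - (k : ℚ_[p]) * (p : ℚ_[p]) ^ (-(n+1 : ℤ))) +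
        (-(x - (j : ℚ_[p]) * (p : ℚ_[p]) ^ (-(n+1 : ℤ)))) := by ring
    rw [heq]
    refine (Padic.nonarchimedean _ _).trans (max_le hxk' ?_)
    rwa [norm_neg]
  have hnorm1 : ‖((j:ℚ_[p]) - (k:ℚ_[p]))‖ = 1 := by
    have hcast : ((j:ℚ_[p]) - (k:ℚ_[p])) = (((j:ℤ) - (k:ℤ) : ℤ) : ℚ_[p]) := by push_cast; ring
    rw [hcast]
    have hle : ‖(((j:ℤ) - k : ℤ) : ℚ_[p])‖ ≤ 1 := Padic.norm_int_le_one _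
    have hlt : ¬ ‖(((j:ℤ) - k : ℤ) : ℚ_[p])‖ < 1 := by
      rw [Padic.norm_intCast_lt_one_iff]
      intro hdvd
      have h2 : p ∣ ((j:ℤ) - k).natAbs := by
        rw [← Int.natCast_dvd_natCast, Int.dvd_natAbs]; exact hdvd
      have h3 : ((j:ℤ) - k).natAbs ≠ 0 := by omega
      have := Nat.le_of_dvd (Nat.pos_of_ne_zero h3) h2
      omega
    linarith [lt_or_eq_of_le hle]
  rw [norm_scale, hnorm1, one_mul] at hdiff
  have : (p:ℝ) ^ n < (p:ℝ) ^ (n+1) :=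
    pow_lt_pow_right₀ (one_lt_p p) (Nat.lt_succ_self n)
  linarith

section Measure

variable [MeasurableSpace ℚ_[p]] [BorelSpace ℚ_[p]] (μ : Measure ℚ_[p]) [μ.IsAddHaarMeasure]

lemma measurableSet_C (n k : ℕ) : MeasurableSet (C p n k) :=
  (isClosed_le (by fun_prop) continuous_const).measurableSet

lemma meas_C (n k : ℕ) : μ (C p n k) = μ (B p n) := by
  have hC : C p n k = (fun x => (-((k:ℚ_[p]) * (p:ℚ_[p]) ^ (-(n+1:ℤ)))) + x) ⁻¹' B p n := by
    ext x
    simp only [C, B, Set.mem_preimage, Set.mem_setOf_eq, neg_add_eq_sub]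
  rw [hC, measure_preimage_add]

lemma meas_B (hμ : μ {x : ℚ_[p] | ‖x‖ ≤ 1} = 1) (n : ℕ) : μ (B p n) = (p : ℝ≥0∞) ^ n := by
  induction n with
  | zero =>
    have : B p 0 = {x : ℚ_[p] | ‖x‖ ≤ 1} := by
      ext x; simp [B]
    rw [this, hμ, pow_zero]
  | succ n ih =>
    rw [B_succ_eq_biUnion,
      measure_biUnion_finset (C_disjoint p n) (fun k _ => measurableSet_C p n k)]
    simp only [meas_C p μ n, ih, Finset.sum_const, Finset.card_range, nsmul_eq_mul]
    rw [pow_succ]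
    ring

lemma meas_B_ne_top (hμ : μ {x : ℚ_[p] | ‖x‖ ≤ 1} = 1) (n : ℕ) : μ (B p n) ≠ ⊤ := by
  rw [meas_B p μ hμ n]
  exact (ENNReal.pow_ne_top (ENNReal.natCast_ne_top p))

end Measure

/-- annuli: T 0 = closed unit ball, T (n+1) = sphere of radius p^(n+1) -/
def T : ℕ → Set ℚ_[p]
  | 0 => {x | ‖x‖ ≤ 1}
  | (n+1) => {x | ‖x‖ = (p : ℝ) ^ (n+1)}

lemma measurableSet_T (n : ℕ) [MeasurableSpace ℚ_[p]] [BorelSpace ℚ_[p]] :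
    MeasurableSet (T p n) := by
  cases n with
  | zero => exact (isClosed_le continuous_norm continuous_const).measurableSet
  | succ n => exact (isClosed_eq continuous_norm continuous_const).measurableSet

lemma norm_rigid {x : ℚ_[p]} {n : ℕ} (h1 : ‖x‖ ≤ (p:ℝ) ^ (n+1)) (h2 : ¬ ‖x‖ ≤ (p:ℝ) ^ n) :
    ‖x‖ = (p:ℝ) ^ (n+1) := by
  push_neg at h2
  have hx0 : x ≠ 0 := by
    intro h
    rw [h, norm_zero] at h2
    exact absurd h2 (not_lt.mpr (by positivity))
  rw [Padic.norm_eq_zpow_neg_valuation hx0] at h1 h2 ⊢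
  have hmono := zpow_right_strictMono₀ (one_lt_p p)
  have e1 : (n : ℤ) < -x.valuation := by
    have := (zpow_natCast (p:ℝ) n) ▸ h2
    exact (hmono.lt_iff_lt.mp this)
  have e2 : -x.valuation ≤ ((n:ℤ) + 1) := by
    have h1' : (p:ℝ) ^ (-x.valuation) ≤ (p:ℝ) ^ ((n:ℤ)+1) := by
      rw [show ((n:ℤ)+1) = ((n+1 : ℕ) : ℤ) by push_cast; ring, zpow_natCast]
      exact h1
    exact hmono.le_iff_le.mp h1'
  have : -x.valuation = (n:ℤ) + 1 := le_antisymm e2 (by omega)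
  rw [this, show ((n:ℤ)+1) = ((n+1 : ℕ) : ℤ) by push_cast; ring, zpow_natCast]

lemma T_succ_eq (n : ℕ) : T p (n+1) = B p (n+1) \ B p n := by
  ext x
  constructor
  · intro hx
    have hx' : ‖x‖ = (p:ℝ) ^ (n+1) := hx
    constructor
    · exact le_of_eq hx'
    · intro hle
      have : (p:ℝ) ^ (n+1) ≤ (p:ℝ) ^ n := hx' ▸ hle
      exact absurd this (not_le.mpr (pow_lt_pow_right₀ (one_lt_p p) (Nat.lt_succ_self n)))
  · rintro ⟨h1, h2⟩
    exact norm_rigid p h1 h2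

lemma T_disjoint : Pairwise (Function.onFun Disjoint (T p)) := by
  intro m n hmn
  rw [Function.onFun, Set.disjoint_left]
  intro x hxm hxn
  have key : ∀ k : ℕ, x ∈ T p (k+1) → (1:ℝ) < ‖x‖ := by
    intro k hk
    have : ‖x‖ = (p:ℝ) ^ (k+1) := hk
    rw [this]
    exact one_lt_pow₀ (one_lt_p p) (Nat.succ_ne_zero k)
  match m, n with
  | 0, 0 => exact hmn rfl
  | 0, n+1 =>
    have : ‖x‖ ≤ 1 := hxm
    exact absurd this (not_le.mpr (key n hxn))
  | m+1, 0 =>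
    have : ‖x‖ ≤ 1 := hxn
    exact absurd this (not_le.mpr (key m hxm))
  | m+1, n+1 =>
    have h1 : ‖x‖ = (p:ℝ) ^ (m+1) := hxm
    have h2 : ‖x‖ = (p:ℝ) ^ (n+1) := hxn
    have := h1 ▸ h2
    rcases Nat.lt_trichotomy m n with h | h | h
    · exact absurd this (ne_of_lt (pow_lt_pow_right₀ (one_lt_p p) (by omega)))
    · exact hmn (by omega)
    · exact absurd this.symm (ne_of_lt (pow_lt_pow_right₀ (one_lt_p p) (by omega)))

lemma iUnion_T : (⋃ n, T p n) = Set.univ := by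
  ext x
  simp only [Set.mem_iUnion, Set.mem_univ, iff_true]
  by_cases h : ‖x‖ ≤ 1
  · exact ⟨0, h⟩
  · push_neg at h
    have hx0 : x ≠ 0 := by
      intro h0
      rw [h0, norm_zero] at h
      linarith
    have hval : ‖x‖ = (p:ℝ) ^ (-x.valuation) := Padic.norm_eq_zpow_neg_valuation hx0
    have hmono := zpow_right_strictMono₀ (one_lt_p p)
    have hpos : 0 < -x.valuation := by
      have : (p:ℝ) ^ (0:ℤ) < (p:ℝ) ^ (-x.valuation) := by
        rw [zpow_zero]
        exact hval ▸ h
      exact hmono.lt_iff_lt.mp this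
    obtain ⟨k, hk⟩ : ∃ k : ℕ, (-x.valuation).toNat = k + 1 :=
      ⟨(-x.valuation).toNat - 1, by omega⟩
    refine ⟨k+1, ?_⟩
    show ‖x‖ = (p:ℝ) ^ (k+1)
    rw [hval, ← zpow_natCast (p:ℝ) (k+1), ← hk, Int.toNat_of_nonneg hpos.le]

section Measure2

variable [MeasurableSpace ℚ_[p]] [BorelSpace ℚ_[p]] (μ : Measure ℚ_[p]) [μ.IsAddHaarMeasure]

lemma meas_T_zero (hμ : μ {x : ℚ_[p] | ‖x‖ ≤ 1} = 1) : μ (T p 0) = 1 := hμ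

lemma meas_T_succ (hμ : μ {x : ℚ_[p] | ‖x‖ ≤ 1} = 1) (n : ℕ) :
    μ (T p (n+1)) = (p : ℝ≥0∞) ^ (n+1) - (p : ℝ≥0∞) ^ n := by
  rw [T_succ_eq, measure_diff (B_subset p n) (measurableSet_B p n).nullMeasurableSet
    (meas_B_ne_top p μ hμ n), meas_B p μ hμ, meas_B p μ hμ]

lemma meas_T_ne_top (hμ : μ {x : ℚ_[p] | ‖x‖ ≤ 1} = 1) (n : ℕ) : μ (T p n) ≠ ⊤ := by
  cases n with
  | zero => rw [meas_T_zero p μ hμ]; exact one_ne_top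
  | succ n =>
    rw [meas_T_succ p μ hμ n]
    exact (tsub_le_self.trans_lt (lt_top_iff_ne_top.mpr (pow_ne_top (natCast_ne_top p)))).ne

lemma meas_T_succ_toReal (hμ : μ {x : ℚ_[p] | ‖x‖ ≤ 1} = 1) (n : ℕ) :
    (μ (T p (n+1))).toReal = (p:ℝ) ^ (n+1) - (p:ℝ) ^ n := by
  rw [meas_T_succ p μ hμ n, ENNReal.toReal_sub_of_le
    (pow_le_pow_right₀ (by exact_mod_cast hp.out.one_lt.le) (Nat.le_succ n))
    (pow_ne_top (natCast_ne_top p))]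
  simp [ENNReal.toReal_pow]

end Measure2

lemma cpow_aux (n : ℕ) (w : ℂ) : (((p:ℝ) ^ n : ℝ) : ℂ) ^ w = ((p:ℂ) ^ w) ^ n := by
  have h1 : (((p:ℝ) ^ n : ℝ) : ℂ) = (p:ℂ) ^ (n : ℂ) := by
    push_cast
    rw [Complex.cpow_natCast]
  have him : (Complex.log (p:ℂ) * (n:ℂ)).im = 0 := by
    simp [Complex.mul_im, Complex.log_im, Complex.natCast_arg]
  rw [h1, ← Complex.cpow_nat_mul]
  exact (Complex.cpow_mul w (by rw [him]; linarith [Real.pi_pos])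
    (by rw [him]; linarith [Real.pi_pos])).symm

lemma norm_c_aux (n : ℕ) (w : ℂ) :
    ‖(((p:ℝ) ^ n : ℝ) : ℂ) ^ w‖ = ((p:ℝ) ^ (w.re)) ^ n := by
  rw [
    Complex.norm_cpow_eq_rpow_re_of_pos (pow_pos (p_pos p) n) w,
    ← Real.rpow_natCast (p:ℝ) n, ← Real.rpow_natCast ((p:ℝ) ^ w.re) n,
    ← Real.rpow_mul (p_pos p).le, ← Real.rpow_mul (p_pos p).le, mul_comm]

end GKaux

/-- Gindikin–Karpelevich/Casselman value of the standard intertwining operator of `SL₂(ℚ_p)` on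
the spherical vector: for the Haar measure `μ` on `ℚ_p` with `μ(ℤ_p) = 1` and `Re s > 0`,
`∫_{ℚ_p} max(1, |x|_p)^(-(s+1)) dμ(x) = (1 - p^(-(s+1))) / (1 - p^(-s))`. -/
theorem sl2_padic_gindikin_karpelevich (p : ℕ) [Fact p.Prime]
    [MeasurableSpace ℚ_[p]] [BorelSpace ℚ_[p]] (μ : Measure ℚ_[p]) [μ.IsAddHaarMeasure]
    (hμ : μ {x : ℚ_[p] | ‖x‖ ≤ 1} = 1) (s : ℂ) (hs : 0 < s.re) :
    Integrable (fun x : ℚ_[p] => ((max 1 ‖x‖ : ℝ) : ℂ) ^ (-(s + 1))) μ ∧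
      ∫ x : ℚ_[p], ((max 1 ‖x‖ : ℝ) : ℂ) ^ (-(s + 1)) ∂μ =
        (1 - (p : ℂ) ^ (-(s + 1))) / (1 - (p : ℂ) ^ (-s)) := by
  set f : ℚ_[p] → ℂ := fun x => ((max 1 ‖x‖ : ℝ) : ℂ) ^ (-(s + 1)) with hf
  set q : ℂ := (p : ℂ) ^ (-(s+1)) with hq
  set r : ℂ := (p : ℂ) ^ (-s) with hr
  set ρ : ℝ := (p : ℝ) ^ (-(s.re + 1)) with hρ
  have hp0 : (p : ℂ) ≠ 0 := by exact_mod_cast (Fact.out : p.Prime).ne_zero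
  have hp1 : (1:ℝ) < p := GKaux.one_lt_p p
  have hppos : (0:ℝ) < p := GKaux.p_pos p
  set τ : ℝ := (p : ℝ) ^ (-s.re) with hτ
  set c : ℕ → ℂ := fun n => (((p:ℝ) ^ n : ℝ) : ℂ) ^ (-(s+1)) with hc
  have hcq : ∀ n, c n = q ^ n := fun n => GKaux.cpow_aux p n _
  have hre : (-(s+1)).re = -(s.re+1) := by simp
  have hρ0 : 0 ≤ ρ := Real.rpow_nonneg hppos.le _
  have hnormc : ∀ n, ‖c n‖ = ρ ^ n := by
    intro n
    rw [hc]
    simp only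
    rw [GKaux.norm_c_aux p n, hre]
  have hEq : ∀ n, Set.EqOn f (fun _ => c n) (GKaux.T p n) := by
    intro n x hx
    cases n with
    | zero =>
      have hx1 : ‖x‖ ≤ 1 := hx
      show ((max 1 ‖x‖ : ℝ) : ℂ) ^ (-(s+1)) = c 0
      rw [max_eq_left hx1, hc]
      norm_num
    | succ n =>
      have hx1 : ‖x‖ = (p:ℝ) ^ (n+1) := hx
      have h1x : (1:ℝ) ≤ ‖x‖ := by
        rw [hx1]; exact one_le_pow₀ hp1.le
      show ((max 1 ‖x‖ : ℝ) : ℂ) ^ (-(s+1)) = c (n+1)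
      rw [max_eq_right h1x, hx1, hc]
  have hTmeas : ∀ n, MeasurableSet (GKaux.T p n) := fun n => GKaux.measurableSet_T p n
  have hTfin : ∀ n, μ (GKaux.T p n) < ⊤ := fun n =>
    lt_top_iff_ne_top.mpr (GKaux.meas_T_ne_top p μ hμ n)
  have hInt : ∀ n, IntegrableOn f (GKaux.T p n) μ := fun n =>
    (integrableOn_const (hTfin n).ne).congr_fun
      (fun x hx => (hEq n hx).symm) (hTmeas n)
  have hnormint : ∀ n, ∫ x in GKaux.T p n, ‖f x‖ ∂μ = (μ (GKaux.T p n)).toReal * ρ ^ n := by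
    intro n
    rw [setIntegral_congr_fun (hTmeas n)
      (show Set.EqOn (fun x => ‖f x‖) (fun _ => ρ ^ n) (GKaux.T p n) from
        fun x hx => by simp only; rw [hEq n hx, hnormc n]),
      setIntegral_const, smul_eq_mul, Measure.real]
  have hτ0 : 0 ≤ τ := Real.rpow_nonneg hppos.le _
  have hτ1 : τ < 1 := Real.rpow_lt_one_of_one_lt_of_neg hp1 (by linarith)
  have hpρ : τ = (p:ℝ) * ρ := by
    rw [hτ, hρ, show -s.re = 1 + (-(s.re+1)) by ring, Real.rpow_add hppos, Real.rpow_one]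
  have hble : ∀ n, (μ (GKaux.T p n)).toReal * ρ ^ n ≤ τ ^ n := by
    intro n
    cases n with
    | zero =>
      rw [GKaux.meas_T_zero p μ hμ]
      simp
    | succ n =>
      rw [GKaux.meas_T_succ_toReal p μ hμ n, hpρ, mul_pow]
      apply mul_le_mul_of_nonneg_right _ (pow_nonneg hρ0 _)
      calc (p:ℝ) ^ (n+1) - (p:ℝ) ^ n ≤ (p:ℝ) ^ (n+1) := by
            have : (0:ℝ) ≤ (p:ℝ) ^ n := by positivity
            linarith
        _ = (p:ℝ) ^ (n+1) := rfl
  have hbsum : Summable (fun n => (μ (GKaux.T p n)).toReal * ρ ^ n) :=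
    Summable.of_nonneg_of_le
      (fun n => mul_nonneg ENNReal.toReal_nonneg (pow_nonneg hρ0 n)) hble
      (summable_geometric_of_lt_one hτ0 hτ1)
  have hIntU : IntegrableOn f (⋃ n, GKaux.T p n) μ :=
    integrableOn_iUnion_of_summable_integral_norm hInt
      (hbsum.congr (fun n => (hnormint n).symm))
  have hIntf : Integrable f μ := by
    rw [GKaux.iUnion_T p, integrableOn_univ] at hIntU
    exact hIntU
  refine ⟨hIntf, ?_⟩
  -- the sum
  have HS : HasSum (fun n => ∫ x in GKaux.T p n, f x ∂μ) (∫ x in ⋃ n, GKaux.T p n, f x ∂μ) :=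
    hasSum_integral_iUnion hTmeas (GKaux.T_disjoint p) hIntU
  have hTint : ∀ n, ∫ x in GKaux.T p n, f x ∂μ = (μ (GKaux.T p n)).toReal • c n := by
    intro n
    rw [setIntegral_congr_fun (hTmeas n) (hEq n), setIntegral_const, Measure.real]
  have HS' : HasSum (fun n => (μ (GKaux.T p n)).toReal • c n) (∫ x, f x ∂μ) := by
    have h1 : (⋃ n, GKaux.T p n) = Set.univ := GKaux.iUnion_T p
    rw [h1, Measure.restrict_univ] at HS
    exact funext hTint ▸ HS
  have hqrp : q = r * (p:ℂ)⁻¹ := by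
    rw [hq, hr, show -(s+1) = -s + (-1) by ring, Complex.cpow_add _ _ hp0,
      Complex.cpow_neg_one]
  have ha : ∀ n, (μ (GKaux.T p (n+1))).toReal • c (n+1) = (1 - (p:ℂ)⁻¹) * r ^ (n+1) := by
    intro n
    rw [GKaux.meas_T_succ_toReal p μ hμ n, hcq, hqrp, Complex.real_smul]
    push_cast
    simp only [mul_pow, inv_pow]
    field_simp
    ring
  have ha0 : (μ (GKaux.T p 0)).toReal • c 0 = 1 := by
    rw [GKaux.meas_T_zero p μ hμ, hcq]
    simp
  have hrnorm : ‖r‖ < 1 := by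
    have hcast : (p:ℂ) = ((p:ℝ):ℂ) := by push_cast; rfl
    rw [hr, hcast, Complex.norm_cpow_eq_rpow_re_of_pos hppos]
    simp only [Complex.neg_re]
    exact Real.rpow_lt_one_of_one_lt_of_neg hp1 (by linarith)
  have hr1 : (1 : ℂ) - r ≠ 0 := by
    refine sub_ne_zero.mpr ?_
    intro h
    rw [← h] at hrnorm
    simp at hrnorm
  rw [← HS'.tsum_eq, Summable.tsum_eq_zero_add HS'.summable, ha0]
  have htail : ∑' n : ℕ, (μ (GKaux.T p (n+1))).toReal • c (n+1)
      = (1 - (p:ℂ)⁻¹) * (r * (1 - r)⁻¹) := by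
    rw [tsum_congr ha]
    rw [tsum_mul_left]
    congr 1
    have : ∀ n : ℕ, r ^ (n+1) = r * r ^ n := fun n => by rw [pow_succ]; ring
    rw [tsum_congr this, tsum_mul_left, tsum_geometric_of_norm_lt_one hrnorm]
  rw [htail, hqrp]
  field_simp
  ring
end

section
/- For every complex number s with Re(s) > 1, one has (∫_ℝ (1 + x^2)^(-(s+1)/2) dx) · (ζ(s) / ζ(s+1)) = Λ(s) / Λ(s+1), where ζ is the Riemann zeta function and Λ is the completed Riemann zeta function. (This is the paper's theorem made explicit for G = SL₂ over ℚ with trivial unramified character: the value of the global standard intertwining operator on the spherical vector equals the ratio Λ(s)/Λ(s+1) of completed Hecke L-functions, the archimedean local factor being the displayed integral.) -/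
open Complex MeasureTheory Real Set

private lemma cpow_pos_eq_exp (r : ℝ) (hr : 0 < r) (w : ℂ) :
    (r : ℂ) ^ w = Complex.exp (w * Real.log r) := by
  rw [Complex.cpow_def_of_ne_zero (by exact_mod_cast hr.ne'), ← Complex.ofReal_log hr.le, mul_comm]

private lemma beta_eq_two_mul_integral (a : ℂ) :
    Complex.betaIntegral (a - 1/2) (1/2)
      = ∫ t in Ioi (0:ℝ), (2:ℂ) * ((1 + t ^ 2 : ℝ) : ℂ) ^ (-a) := by
  have himg : (fun t : ℝ => (1 + t ^ 2)⁻¹) '' Ioi 0 = Ioo (0:ℝ) 1 := by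
    ext y
    constructor
    · rintro ⟨t, ht, rfl⟩
      have ht' : (0:ℝ) < t := ht
      have h1 : (1:ℝ) < 1 + t ^ 2 := by nlinarith
      exact ⟨inv_pos.mpr (by linarith), inv_lt_one_of_one_lt₀ h1⟩
    · rintro ⟨hy0, hy1⟩
      have h1 : (1:ℝ) < y⁻¹ := (one_lt_inv₀ hy0).2 hy1
      refine ⟨Real.sqrt (y⁻¹ - 1), ?_, ?_⟩
      · exact Real.sqrt_pos.mpr (by linarith)
      · show (1 + Real.sqrt (y⁻¹ - 1) ^ 2)⁻¹ = y
        rw [Real.sq_sqrt (by linarith)]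
        field_simp
        ring
  have hderiv : ∀ x ∈ Ioi (0:ℝ), HasDerivWithinAt (fun t : ℝ => (1 + t ^ 2)⁻¹)
      (-(2 * x) / (1 + x ^ 2) ^ 2) (Ioi 0) x := by
    intro x _
    have h1 : HasDerivAt (fun t : ℝ => 1 + t ^ 2) (2 * x) x := by
      simpa using (hasDerivAt_pow 2 x).const_add 1
    have h2 := h1.inv (by positivity)
    exact h2.hasDerivWithinAt
  have hinj : InjOn (fun t : ℝ => (1 + t ^ 2)⁻¹) (Ioi 0) := by
    have : StrictAntiOn (fun t : ℝ => (1 + t ^ 2)⁻¹) (Ioi 0) := by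
      intro t1 ht1 t2 ht2 h
      have ht1' : (0:ℝ) < t1 := ht1
      have : (1:ℝ) + t1 ^ 2 < 1 + t2 ^ 2 := by nlinarith
      exact inv_strictAnti₀ (by positivity) this
    exact this.injOn
  rw [Complex.betaIntegral, intervalIntegral.integral_of_le zero_le_one,
    MeasureTheory.integral_Ioc_eq_integral_Ioo, ← himg,
    integral_image_eq_integral_abs_deriv_smul measurableSet_Ioi hderiv hinj]
  refine setIntegral_congr_fun measurableSet_Ioi fun t ht => ?_
  have ht' : (0:ℝ) < t := ht
  have hA : (0:ℝ) < 1 + t ^ 2 := by positivity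
  have hAc : ((1 + t ^ 2 : ℝ) : ℂ) ≠ 0 := by exact_mod_cast hA.ne'
  have habs : |(-(2 * t) / (1 + t ^ 2) ^ 2)| = 2 * t / (1 + t ^ 2) ^ 2 := by
    rw [abs_div, abs_neg, _root_.abs_of_nonneg (show (0:ℝ) ≤ 2 * t by positivity),
      _root_.abs_of_nonneg (show (0:ℝ) ≤ (1 + t ^ 2) ^ 2 by positivity)]
  have hsub : (1 : ℂ) - (((1 + t ^ 2)⁻¹ : ℝ) : ℂ) = ((t ^ 2 / (1 + t ^ 2) : ℝ) : ℂ) := by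
    have h2 : (1:ℂ) + (t:ℂ) ^ 2 ≠ 0 := by push_cast at hAc; exact hAc
    push_cast
    rw [eq_div_iff h2, sub_mul, one_mul, inv_mul_cancel₀ h2]
    ring
  show (|(-(2 * t) / (1 + t ^ 2) ^ 2)| : ℝ) • ((((1 + t ^ 2)⁻¹ : ℝ) : ℂ) ^ (a - 1/2 - 1) *
      ((1:ℂ) - (((1 + t ^ 2)⁻¹ : ℝ) : ℂ)) ^ ((1:ℂ)/2 - 1)) = 2 * ((1 + t ^ 2 : ℝ) : ℂ) ^ (-a)
  rw [habs, real_smul, hsub]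
  set L : ℂ := (Real.log (1 + t ^ 2) : ℂ) with hL
  set M : ℂ := (Real.log t : ℂ) with hM
  have r0 : Real.exp (2 * Real.log (1 + t ^ 2)) = (1 + t ^ 2) ^ 2 := by
    rw [show (2:ℝ) * Real.log (1 + t ^ 2) = Real.log ((1 + t ^ 2) ^ 2) by
        rw [Real.log_pow]; push_cast; ring,
      Real.exp_log (by positivity)]
  have r1 : Real.exp (Real.log t - 2 * Real.log (1 + t ^ 2)) = t / (1 + t ^ 2) ^ 2 := by
    rw [Real.exp_sub, Real.exp_log ht', r0]
  have c0 : ((2 * t / (1 + t ^ 2) ^ 2 : ℝ) : ℂ) = 2 * Complex.exp (M - 2 * L) := by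
    rw [show M - 2 * L = ((Real.log t - 2 * Real.log (1 + t ^ 2) : ℝ) : ℂ) by
        rw [hM, hL]; push_cast; ring,
      ← Complex.ofReal_exp, r1]
    push_cast; ring
  have e1 : (((1 + t ^ 2)⁻¹ : ℝ) : ℂ) ^ (a - 1/2 - 1) = Complex.exp ((a - 1/2 - 1) * (-L)) := by
    rw [cpow_pos_eq_exp _ (by positivity), Real.log_inv, hL]
    push_cast; ring_nf
  have e2 : ((t ^ 2 / (1 + t ^ 2) : ℝ) : ℂ) ^ ((1:ℂ)/2 - 1)
      = Complex.exp (((1:ℂ)/2 - 1) * (2 * M - L)) := by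
    rw [cpow_pos_eq_exp _ (by positivity),
      Real.log_div (by positivity) (by positivity), Real.log_pow, hL, hM]
    push_cast; ring_nf
  have e5 : ((1 + t ^ 2 : ℝ) : ℂ) ^ (-a) = Complex.exp (-a * L) := by
    rw [cpow_pos_eq_exp _ hA, hL]
  rw [c0, e1, e2, e5, mul_assoc, ← Complex.exp_add, ← Complex.exp_add]
  congr 1
  ring

/-- The paper's theorem for `G = SL₂` over `ℚ` with trivial unramified character: the value of
the global standard intertwining operator on the spherical vector equals `Λ(s)/Λ(s+1)`:
for `Re s > 1`,
`(∫_ℝ (1 + x²)^(-(s+1)/2) dx) · (ζ(s)/ζ(s+1)) = Λ(s)/Λ(s+1)`. -/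
theorem sl2_global_intertwining_spherical (s : ℂ) (hs : 1 < s.re) :
    (∫ x : ℝ, ((1 + x ^ 2 : ℝ) : ℂ) ^ (-(s + 1) / 2)) *
        (riemannZeta s / riemannZeta (s + 1)) =
      completedRiemannZeta s / completedRiemannZeta (s + 1) := by
  set a : ℂ := (s + 1) / 2 with ha
  have hre : 1 < a.re := by
    rw [ha, show ((2:ℂ)) = ((2:ℝ):ℂ) by norm_num, Complex.div_ofReal_re]
    simp only [Complex.add_re, Complex.one_re]
    linarith
  have hexp : ∀ x : ℝ, ((1 + x ^ 2 : ℝ) : ℂ) ^ (-(s + 1) / 2) = ((1 + x ^ 2 : ℝ) : ℂ) ^ (-a) := by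
    intro x
    congr 1
    rw [ha]; ring
  have hcont : Continuous fun x : ℝ => ((1 + x ^ 2 : ℝ) : ℂ) ^ (-a) := by
    apply Continuous.cpow (Complex.continuous_ofReal.comp (by continuity)) continuous_const
    exact fun x => Complex.ofReal_mem_slitPlane.mpr (by positivity)
  have hint : Integrable fun x : ℝ => ((1 + x ^ 2 : ℝ) : ℂ) ^ (-a) := by
    refine integrable_inv_one_add_sq.mono hcont.aestronglyMeasurable
      (ae_of_all _ fun x => ?_)
    have hx : (0:ℝ) < 1 + x ^ 2 := by positivity
    rw [Complex.norm_cpow_eq_rpow_re_of_pos hx, Real.norm_eq_abs,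
      _root_.abs_of_nonneg (by positivity : (0:ℝ) ≤ (1 + x ^ 2)⁻¹),
      show (-a).re = -a.re by simp, ← Real.rpow_neg_one]
    exact Real.rpow_le_rpow_of_exponent_le (by nlinarith) (by linarith)
  have heven : (∫ x : ℝ, ((1 + x ^ 2 : ℝ) : ℂ) ^ (-a))
      = 2 * ∫ x in Ioi (0:ℝ), ((1 + x ^ 2 : ℝ) : ℂ) ^ (-a) := by
    have h1 : (∫ x in Iic (0:ℝ), ((1 + x ^ 2 : ℝ) : ℂ) ^ (-a))
        = ∫ x in Ioi (0:ℝ), ((1 + x ^ 2 : ℝ) : ℂ) ^ (-a) := by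
      calc ∫ x in Iic (0:ℝ), ((1 + x ^ 2 : ℝ) : ℂ) ^ (-a)
          = ∫ x in Iic (0:ℝ), ((1 + (-x) ^ 2 : ℝ) : ℂ) ^ (-a) :=
            setIntegral_congr_fun measurableSet_Iic fun x _ => by simp [neg_sq]
        _ = ∫ x in Ioi (-(0:ℝ)), ((1 + x ^ 2 : ℝ) : ℂ) ^ (-a) :=
            integral_comp_neg_Iic 0 (fun x => ((1 + x ^ 2 : ℝ) : ℂ) ^ (-a))
        _ = ∫ x in Ioi (0:ℝ), ((1 + x ^ 2 : ℝ) : ℂ) ^ (-a) := by rw [neg_zero]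
    rw [← intervalIntegral.integral_Iic_add_Ioi (b := (0:ℝ)) hint.integrableOn
      hint.integrableOn, h1, two_mul]
  have hbeta := beta_eq_two_mul_integral a
  rw [MeasureTheory.integral_const_mul] at hbeta
  have hGa : Complex.Gamma a ≠ 0 := Complex.Gamma_ne_zero_of_re_pos (by linarith)
  have hGB := Complex.Gamma_mul_Gamma_eq_betaIntegral
    (s := a - 1/2) (t := 1/2)
    (by rw [Complex.sub_re]; norm_num; linarith) (by norm_num)
  rw [show a - 1/2 + 1/2 = a by ring] at hGB
  have hI : (∫ x : ℝ, ((1 + x ^ 2 : ℝ) : ℂ) ^ (-a))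
      = Complex.Gamma (a - 1/2) * Complex.Gamma (1/2) / Complex.Gamma a := by
    rw [heven, ← hbeta, eq_div_iff hGa, mul_comm]
    exact hGB.symm
  simp_rw [hexp]
  -- now express the completed zeta functions
  have hs0 : s ≠ 0 := fun h => by simp [h] at hs; linarith
  have hs1 : s + 1 ≠ 0 := fun h => by
    have := congrArg Complex.re h
    simp at this
    linarith
  have hGr1 : Gammaℝ s ≠ 0 := Gammaℝ_ne_zero_of_re_pos (by linarith)
  have hGr2 : Gammaℝ (s + 1) ≠ 0 := Gammaℝ_ne_zero_of_re_pos (by simp; linarith)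
  have hz1 : completedRiemannZeta s = riemannZeta s * Gammaℝ s := by
    rw [riemannZeta_def_of_ne_zero hs0, div_mul_cancel₀ _ hGr1]
  have hz2 : completedRiemannZeta (s + 1) = riemannZeta (s + 1) * Gammaℝ (s + 1) := by
    rw [riemannZeta_def_of_ne_zero hs1, div_mul_cancel₀ _ hGr2]
  have hzeta1 : riemannZeta (s + 1) ≠ 0 :=
    riemannZeta_ne_zero_of_one_lt_re (by simp; linarith)
  have hpi : ∀ w : ℂ, (π : ℂ) ^ w ≠ 0 := fun w => by
    rw [Complex.cpow_def_of_ne_zero (by exact_mod_cast Real.pi_ne_zero)]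
    exact Complex.exp_ne_zero _
  have hkey : (π : ℂ) ^ (-s / 2) = Complex.Gamma (1/2) * (π : ℂ) ^ (-(s + 1) / 2) := by
    rw [Complex.Gamma_one_half_eq, ← Complex.cpow_add _ _ (by exact_mod_cast Real.pi_ne_zero)]
    congr 1
    ring
  have hGhalf : Complex.Gamma ((s+1)/2) ≠ 0 :=
    Complex.Gamma_ne_zero_of_re_pos (by rw [← ha]; linarith)
  rw [hI, ha, show (s + 1)/2 - 1/2 = s / 2 by ring]
  rw [ha] at hGa
  have hP : (π : ℂ) ^ (-(s + 1) / 2) ≠ 0 := hpi _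
  rw [hz1, hz2, Gammaℝ_def, Gammaℝ_def, hkey]
  rw [show riemannZeta s * (Complex.Gamma (1/2) * (π:ℂ) ^ (-(s+1)/2) * Complex.Gamma (s/2))
      = riemannZeta s * Complex.Gamma (1/2) * Complex.Gamma (s/2) * (π:ℂ) ^ (-(s+1)/2) by ring,
    show riemannZeta (s+1) * ((π:ℂ) ^ (-(s+1)/2) * Complex.Gamma ((s+1)/2))
      = riemannZeta (s+1) * Complex.Gamma ((s+1)/2) * (π:ℂ) ^ (-(s+1)/2) by ring,
    mul_div_mul_right _ _ hP, div_mul_div_comm]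
  congr 1 <;> ring
end

section
/- For every complex number s with Re(s) > 1, the family over primes p of the factors (1 - p^(-(s+1))) / (1 - p^(-s)) is multipliable, and (∫_ℝ (1 + x^2)^(-(s+1)/2) dx) · ∏_{p prime} (1 - p^(-(s+1))) / (1 - p^(-s)) = Λ(s) / Λ(s+1), where Λ is the completed Riemann zeta function. (This is the Euler-product form of the paper's theorem for G = SL₂ over ℚ with trivial unramified character: the global intertwining operator value on the spherical vector is the product over all places of the local Gindikin–Karpelevich factors, and equals Λ(s)/Λ(s+1).) -/
open Complex MeasureTheory Real


lemma sl2aux_image : (fun x : ℝ => x ^ 2 / (1 + x ^ 2)) '' Set.Ioi 0 = Set.Ioo 0 1 := by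
  ext t
  constructor
  · rintro ⟨x, hx, rfl⟩
    have hx0 : (0:ℝ) < x := hx
    have h1 : (0:ℝ) < 1 + x ^ 2 := by positivity
    constructor
    · positivity
    · rw [div_lt_one h1]; linarith
  · rintro ⟨ht0, ht1⟩
    refine ⟨Real.sqrt (t / (1 - t)), ?_, ?_⟩
    · have : (0:ℝ) < t / (1 - t) := div_pos ht0 (by linarith)
      exact Real.sqrt_pos.mpr this
    · have h1t : (0:ℝ) < 1 - t := by linarith
      have hsq : Real.sqrt (t / (1 - t)) ^ 2 = t / (1 - t) :=
        Real.sq_sqrt (le_of_lt (div_pos ht0 h1t))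
      simp only [hsq]
      field_simp
      ring

lemma sl2aux_inj : Set.InjOn (fun x : ℝ => x ^ 2 / (1 + x ^ 2)) (Set.Ioi 0) := by
  have : StrictMonoOn (fun x : ℝ => x ^ 2 / (1 + x ^ 2)) (Set.Ioi 0) := by
    intro a ha b hb hab
    have ha0 : (0:ℝ) < a := ha
    have hb0 : (0:ℝ) < b := hb
    have h1 : (0:ℝ) < 1 + a ^ 2 := by positivity
    have h2 : (0:ℝ) < 1 + b ^ 2 := by positivity
    simp only
    rw [div_lt_div_iff₀ h1 h2]
    nlinarith
  exact this.injOn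

lemma sl2aux_deriv {x : ℝ} (hx : x ∈ Set.Ioi (0:ℝ)) :
    HasDerivWithinAt (fun x : ℝ => x ^ 2 / (1 + x ^ 2))
      (2 * x / (1 + x ^ 2) ^ 2) (Set.Ioi 0) x := by
  have h1 : (1 + x ^ 2 : ℝ) ≠ 0 := by positivity
  have := (hasDerivAt_pow 2 x).div ((hasDerivAt_const x (1:ℝ)).add (hasDerivAt_pow 2 x)) h1
  refine (this.hasDerivWithinAt (s := Set.Ioi 0)).congr_deriv ?_
  simp only [Pi.add_apply]
  field_simp
  ring

lemma sl2aux_pointwise (w : ℂ) {x : ℝ} (hx : x ∈ Set.Ioi (0:ℝ)) :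
    |2 * x / (1 + x ^ 2) ^ 2| •
        ((((x ^ 2 / (1 + x ^ 2) : ℝ) : ℂ)) ^ ((1:ℂ)/2 - 1) *
          (1 - ((x ^ 2 / (1 + x ^ 2) : ℝ) : ℂ)) ^ (w - 1/2 - 1)) =
      2 * ((1 + x ^ 2 : ℝ) : ℂ) ^ (-w) := by
  have hx0 : (0:ℝ) < x := hx
  have ha : (0:ℝ) < 1 + x ^ 2 := by positivity
  have haC : ((1 + x ^ 2 : ℝ) : ℂ) ≠ 0 := by
    exact_mod_cast ne_of_gt ha
  -- rewrite the second factor: 1 - t = (1+x²)⁻¹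
  have h1mt : (1 : ℂ) - ((x ^ 2 / (1 + x ^ 2) : ℝ) : ℂ) = (((1 + x ^ 2 : ℝ) : ℂ))⁻¹ := by
    have : (1:ℝ) - x ^ 2 / (1 + x ^ 2) = (1 + x ^ 2)⁻¹ := by field_simp; ring
    rw [← Complex.ofReal_inv, ← this]; push_cast; ring
  -- first factor as a real rpow
  have hfirst : (((x ^ 2 / (1 + x ^ 2) : ℝ) : ℂ)) ^ ((1:ℂ)/2 - 1)
      = (((x ^ 2 / (1 + x ^ 2)) ^ (-(1/2) : ℝ) : ℝ) : ℂ) := by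
    rw [Complex.ofReal_cpow (by positivity) (-(1/2) : ℝ)]
    norm_num
  have hsecond : ((((1 + x ^ 2 : ℝ) : ℂ))⁻¹) ^ (w - 1/2 - 1)
      = (((1 + x ^ 2 : ℝ) : ℂ)) ^ (3/2 - w) := by
    rw [Complex.inv_cpow _ _ (by
      rw [Complex.arg_ofReal_of_nonneg (le_of_lt ha)]
      exact Real.pi_pos.ne)]
    rw [← Complex.cpow_neg]
    ring_nf
  rw [hfirst, h1mt, hsecond]
  -- now everything is ofReal factors times one complex power of (1+x²)
  have hrp : (x ^ 2 / (1 + x ^ 2)) ^ (-(1/2) : ℝ) = (1 + x ^ 2) ^ ((1:ℝ)/2) / x := by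
    rw [Real.rpow_neg (by positivity), Real.div_rpow (by positivity) (le_of_lt ha)]
    rw [show ((x:ℝ)^2) ^ ((1:ℝ)/2) = x by
      rw [← Real.rpow_natCast x 2, ← Real.rpow_mul (le_of_lt hx0)]; norm_num]
    rw [inv_div]
  rw [hrp]
  have hsmul : ∀ (c : ℝ) (z : ℂ), c • z = (c : ℂ) * z := fun c z => by
    simp [Complex.real_smul]
  rw [abs_of_pos (by positivity : (0:ℝ) < 2 * x / (1 + x ^ 2) ^ 2), hsmul]
  have hcoef : ((2 * x / (1 + x ^ 2) ^ 2 : ℝ) : ℂ) * (((1 + x ^ 2) ^ ((1:ℝ)/2) / x : ℝ) : ℂ)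
      = 2 * (((1 + x ^ 2) ^ (-(3/2) : ℝ) : ℝ) : ℂ) := by
    have : (2 * x / (1 + x ^ 2) ^ 2 : ℝ) * ((1 + x ^ 2) ^ ((1:ℝ)/2) / x)
        = 2 * (1 + x ^ 2) ^ (-(3/2) : ℝ) := by
      rw [Real.rpow_neg (le_of_lt ha)]
      rw [show (1 + x ^ 2 : ℝ) ^ ((3:ℝ)/2) = (1 + x ^ 2) ^ (2:ℝ) / (1 + x ^ 2) ^ ((1:ℝ)/2) by
        rw [← Real.rpow_sub ha]; norm_num]
      have h2 : (1 + x ^ 2 : ℝ) ^ (2:ℝ) = (1 + x ^ 2) ^ (2:ℕ) := by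
        rw [← Real.rpow_natCast (1 + x ^ 2) 2]; norm_num
      have hne : (1 + x ^ 2 : ℝ) ^ ((1:ℝ)/2) ≠ 0 := by positivity
      rw [h2]; field_simp
    rw [← Complex.ofReal_mul, this]
    push_cast
    ring
  calc ((2 * x / (1 + x ^ 2) ^ 2 : ℝ) : ℂ) *
        ((((1 + x ^ 2) ^ ((1:ℝ)/2) / x : ℝ) : ℂ) * ((1 + x ^ 2 : ℝ) : ℂ) ^ ((3:ℂ)/2 - w))
      = (((2 * x / (1 + x ^ 2) ^ 2 : ℝ) : ℂ) * (((1 + x ^ 2) ^ ((1:ℝ)/2) / x : ℝ) : ℂ)) *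
        ((1 + x ^ 2 : ℝ) : ℂ) ^ ((3:ℂ)/2 - w) := by ring
    _ = 2 * ((((1 + x ^ 2) ^ (-(3/2) : ℝ) : ℝ) : ℂ) * ((1 + x ^ 2 : ℝ) : ℂ) ^ ((3:ℂ)/2 - w)) := by
        rw [hcoef]; ring
    _ = 2 * ((1 + x ^ 2 : ℝ) : ℂ) ^ (-w) := by
        rw [Complex.ofReal_cpow (le_of_lt ha) (-(3/2) : ℝ), ← Complex.cpow_add _ _ haC]
        push_cast
        congr 1
        ring

lemma sl2aux_beta (w : ℂ) :
    Complex.betaIntegral (1/2) (w - 1/2)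
      = 2 * ∫ x in Set.Ioi (0:ℝ), ((1 + x ^ 2 : ℝ) : ℂ) ^ (-w) := by
  rw [Complex.betaIntegral, intervalIntegral.integral_of_le zero_le_one,
    MeasureTheory.integral_Ioc_eq_integral_Ioo, ← sl2aux_image,
    MeasureTheory.integral_image_eq_integral_abs_deriv_smul measurableSet_Ioi
      (fun x hx => sl2aux_deriv hx) sl2aux_inj]
  rw [MeasureTheory.setIntegral_congr_fun measurableSet_Ioi
    (fun x hx => sl2aux_pointwise w hx)]
  rw [MeasureTheory.integral_const_mul]

lemma sl2aux_integrable (w : ℂ) (hw : 1 < w.re) :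
    MeasureTheory.Integrable (fun x : ℝ => ((1 + x ^ 2 : ℝ) : ℂ) ^ (-w)) := by
  have hcont : Continuous (fun x : ℝ => ((1 + x ^ 2 : ℝ) : ℂ) ^ (-w)) := by
    apply Continuous.cpow
    · exact Complex.continuous_ofReal.comp (by continuity)
    · exact continuous_const
    · intro x
      rw [Complex.mem_slitPlane_iff]
      left
      simp only [Complex.ofReal_re]
      positivity
  refine MeasureTheory.Integrable.mono integrable_inv_one_add_sq
    hcont.aestronglyMeasurable (Filter.Eventually.of_forall fun x => ?_)
  have ha : (0:ℝ) < 1 + x ^ 2 := by positivity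
  rw [Complex.norm_cpow_eq_rpow_re_of_pos ha]
  rw [Real.norm_eq_abs, abs_of_pos (by positivity : (0:ℝ) < (1 + x ^ 2)⁻¹)]
  calc (1 + x ^ 2) ^ (-w).re ≤ (1 + x ^ 2) ^ (-1 : ℝ) := by
        apply Real.rpow_le_rpow_of_exponent_le (by nlinarith)
        simp only [Complex.neg_re]
        linarith
    _ = (1 + x ^ 2)⁻¹ := Real.rpow_neg_one _

lemma sl2aux_integral (w : ℂ) (hw : 1 < w.re) :
    ∫ x : ℝ, ((1 + x ^ 2 : ℝ) : ℂ) ^ (-w)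
      = (π : ℂ) ^ (1/2 : ℂ) * Complex.Gamma (w - 1/2) / Complex.Gamma w := by
  have hint := sl2aux_integrable w hw
  have hsplit := intervalIntegral.integral_Iic_add_Ioi (b := (0:ℝ))
    hint.integrableOn hint.integrableOn
  have heven : (∫ x in Set.Iic (0:ℝ), ((1 + x ^ 2 : ℝ) : ℂ) ^ (-w))
      = ∫ x in Set.Ioi (0:ℝ), ((1 + x ^ 2 : ℝ) : ℂ) ^ (-w) := by
    have := integral_comp_neg_Ioi (0:ℝ) (fun x => ((1 + x ^ 2 : ℝ) : ℂ) ^ (-w))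
    simp only [neg_zero, neg_sq] at this
    exact this.symm
  have hfull : (∫ x : ℝ, ((1 + x ^ 2 : ℝ) : ℂ) ^ (-w))
      = 2 * ∫ x in Set.Ioi (0:ℝ), ((1 + x ^ 2 : ℝ) : ℂ) ^ (-w) := by
    rw [← hsplit, heven]; ring
  have hbeta : Complex.Gamma (1/2 : ℂ) * Complex.Gamma (w - 1/2)
      = Complex.Gamma w * Complex.betaIntegral (1/2) (w - 1/2) := by
    have := Complex.Gamma_mul_Gamma_eq_betaIntegral (s := (1/2 : ℂ)) (t := w - 1/2)
      (by norm_num) (by simp only [Complex.sub_re, Complex.one_re, Complex.div_re]; simp; linarith)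
    convert this using 3
    ring
  have hGw : Complex.Gamma w ≠ 0 := Complex.Gamma_ne_zero_of_re_pos (by linarith)
  rw [hfull, ← sl2aux_beta w, eq_div_iff hGw, ← Complex.Gamma_one_half_eq]
  linear_combination -hbeta

/-- Euler-product form of the paper's theorem for `G = SL₂` over `ℚ` with trivial unramified
character: for `Re s > 1`, the family of local factors `(1 - p^(-(s+1)))/(1 - p^(-s))` over
primes `p` is multipliable and
`(∫_ℝ (1 + x²)^(-(s+1)/2) dx) · ∏_p (1 - p^(-(s+1)))/(1 - p^(-s)) = Λ(s)/Λ(s+1)`. -/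
theorem sl2_global_intertwining_spherical_euler_product (s : ℂ) (hs : 1 < s.re) :
    Multipliable (fun p : Nat.Primes =>
      (1 - ((p : ℕ) : ℂ) ^ (-(s + 1))) / (1 - ((p : ℕ) : ℂ) ^ (-s))) ∧
      (∫ x : ℝ, ((1 + x ^ 2 : ℝ) : ℂ) ^ (-(s + 1) / 2)) *
          (∏' p : Nat.Primes, (1 - ((p : ℕ) : ℂ) ^ (-(s + 1))) / (1 - ((p : ℕ) : ℂ) ^ (-s))) =
        completedRiemannZeta s / completedRiemannZeta (s + 1) := by
  have hs1 : 1 < (s + 1).re := by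
    simp only [Complex.add_re, Complex.one_re]; linarith
  have h1 := riemannZeta_eulerProduct_hasProd hs
  have h2 := riemannZeta_eulerProduct_hasProd hs1
  have hz1 : riemannZeta (s + 1) ≠ 0 := riemannZeta_ne_zero_of_one_lt_re hs1
  have key : HasProd (fun p : Nat.Primes =>
      (1 - ((p : ℕ) : ℂ) ^ (-(s + 1))) / (1 - ((p : ℕ) : ℂ) ^ (-s)))
      (riemannZeta s / riemannZeta (s + 1)) := by
    have ht := Filter.Tendsto.div h1 h2 hz1
    refine Filter.Tendsto.congr (fun F => ?_) ht
    simp only [Pi.div_apply]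
    rw [← Finset.prod_div_distrib]
    exact Finset.prod_congr rfl fun p _ => inv_div_inv _ _
  refine ⟨key.multipliable, ?_⟩
  rw [key.tprod_eq]
  -- the archimedean factor
  have hre : 1 < ((s + 1) / 2).re := by
    rw [Complex.div_re]
    simp only [Complex.add_re, Complex.one_re, Complex.add_im, Complex.one_im]
    norm_num
    nlinarith [Complex.normSq_apply (2:ℂ)]
  have hint : (∫ x : ℝ, ((1 + x ^ 2 : ℝ) : ℂ) ^ (-(s + 1) / 2))
      = (π : ℂ) ^ (1/2 : ℂ) * Complex.Gamma (s / 2) / Complex.Gamma ((s + 1) / 2) := by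
    have := sl2aux_integral ((s + 1) / 2) hre
    rw [show (s + 1) / 2 - 1/2 = s / 2 by ring] at this
    rw [← this]
    congr 1
    funext x
    congr 1
    ring
  rw [hint]
  -- completed zeta in terms of Gammaℝ and ζ
  have hΛ : ∀ z : ℂ, 1 < z.re → completedRiemannZeta z = Complex.Gammaℝ z * riemannZeta z := by
    intro z hz
    rw [riemannZeta_def_of_ne_zero (fun h => by rw [h] at hz; norm_num at hz)]
    rw [mul_comm, div_mul_cancel₀ _ (Complex.Gammaℝ_ne_zero_of_re_pos (by linarith))]
  rw [hΛ s hs, hΛ (s + 1) hs1, Complex.Gammaℝ_def, Complex.Gammaℝ_def]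
  have hπ : (π : ℂ) ≠ 0 := by
    exact_mod_cast Real.pi_pos.ne'
  have hπ1 : (π : ℂ) ^ (-s / 2) ≠ 0 := by
    simp [Complex.cpow_eq_zero_iff, hπ]
  have hπ2 : (π : ℂ) ^ (-(s + 1) / 2) ≠ 0 := by
    simp [Complex.cpow_eq_zero_iff, hπ]
  have hG1 : Complex.Gamma ((s + 1) / 2) ≠ 0 := by
    apply Complex.Gamma_ne_zero_of_re_pos; linarith
  have hππ : (π : ℂ) ^ (1/2 : ℂ) * (π : ℂ) ^ (-(s + 1) / 2) = (π : ℂ) ^ (-s / 2) := by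
    rw [← Complex.cpow_add _ _ hπ]
    congr 1
    ring
  rw [div_mul_div_comm]
  rw [div_eq_div_iff (by exact mul_ne_zero hG1 hz1)
    (by exact mul_ne_zero (mul_ne_zero hπ2 hG1) hz1)]
  linear_combination (Complex.Gamma (s / 2) * riemannZeta s * Complex.Gamma ((s + 1) / 2) *
    riemannZeta (s + 1)) * hππ
end
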